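/- Let d ≥ 1, let v ⊆ Fin d be nonempty, let c ∈ ℝ, and define the scaled unanimity game val^{(v)}(u) := c if v ⊆ u and val^{(v)}(u) := 0 otherwise. Then the Shapley value of player j for val^{(v)} equals c/|v| if j ∈ v, and equals 0 if j ∉ v. -/

import Mathlib

open Finset

lemma shapley_key (n s : ℕ) (hs : s ≤ n) :
    ∑ k ∈ range (n - s + 1), (Nat.choose (n - s) k : ℝ) * ((Nat.choose n (k + s) : ℝ))⁻¹
      = (n + 1) / (s + 1) := by
  have h1 : ∀ k ∈ range (n - s + 1),
      (Nat.choose (n - s) k : ℝ) * ((Nat.choose n (k + s) : ℝ))⁻¹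
        = (Nat.choose (k + s) s : ℝ) / (Nat.choose n s : ℝ) := by
    intro k hk
    rw [mem_range, Nat.lt_succ_iff] at hk
    have hkn : k + s ≤ n := by omega
    have hid := Nat.choose_mul (n := n) (Nat.le_add_left s k)
    have h2 : (Nat.choose n (k + s) : ℝ) * (Nat.choose (k + s) s : ℝ)
        = (Nat.choose n s : ℝ) * (Nat.choose (n - s) k : ℝ) := by
      rw [show k + s - s = k from by omega] at hid
      exact_mod_cast congrArg (Nat.cast (R := ℝ)) hid
    have hpos1 : (0 : ℝ) < Nat.choose n (k + s) := by
      exact_mod_cast Nat.choose_pos hkn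
    have hpos2 : (0 : ℝ) < Nat.choose n s := by
      exact_mod_cast Nat.choose_pos hs
    field_simp
    linarith [h2]
  rw [Finset.sum_congr rfl h1, ← Finset.sum_div]
  have h3 : ∑ k ∈ range (n - s + 1), (Nat.choose (k + s) s : ℝ)
      = (Nat.choose (n + 1) (s + 1) : ℝ) := by
    rw [← Nat.cast_sum]
    congr 1
    rw [← Nat.sum_Icc_choose n s]
    rw [← Finset.Ico_add_one_right_eq_Icc, Finset.sum_Ico_eq_sum_range]
    rw [show n + 1 - s = n - s + 1 from by omega]
    exact Finset.sum_congr rfl fun k _ => by rw [Nat.add_comm s k]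
  rw [h3]
  have hmul := Nat.add_one_mul_choose_eq n s
  have hmul' : ((n : ℝ) + 1) * (Nat.choose n s : ℝ)
      = (Nat.choose (n + 1) (s + 1) : ℝ) * ((s : ℝ) + 1) := by
    exact_mod_cast congrArg (Nat.cast (R := ℝ)) hmul
  have hpos2 : (0 : ℝ) < Nat.choose n s := by exact_mod_cast Nat.choose_pos hs
  field_simp
  linarith [hmul']

/-- The Shapley value of player `j` for the value function `val`. -/
noncomputable def shapley {d : ℕ} (val : Finset (Fin d) → ℝ) (j : Fin d) : ℝ :=
  (1 / (d : ℝ)) * ∑ u ∈ (Finset.univ.erase j).powerset,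
    ((Nat.choose (d - 1) u.card : ℝ))⁻¹ * (val (insert j u) - val u)

/-- Shapley values of the scaled unanimity game on a nonempty coalition `v`:
`c / |v|` for members of `v`, `0` for non-members. -/
theorem shapley_unanimity {d : ℕ} (hd : 1 ≤ d) (v : Finset (Fin d)) (hv : v.Nonempty)
    (c : ℝ) (val : Finset (Fin d) → ℝ)
    (hval : ∀ u : Finset (Fin d), val u = if v ⊆ u then c else 0) (j : Fin d) :
    (j ∈ v → shapley val j = c / v.card) ∧ (j ∉ v → shapley val j = 0) := by
  constructor
  · -- j ∈ v
    intro hj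
    set t := v.erase j with ht
    set S := (Finset.univ : Finset (Fin d)).erase j with hS
    have hm : 1 ≤ v.card := Finset.card_pos.mpr hv
    have htS : t ⊆ S := Finset.erase_subset_erase j (Finset.subset_univ v)
    have hScard : S.card = d - 1 := by
      rw [hS, Finset.card_erase_of_mem (Finset.mem_univ j), Finset.card_univ, Fintype.card_fin]
    have htcard : t.card = v.card - 1 := Finset.card_erase_of_mem hj
    -- Step A: rewrite each summand
    have stepA : ∀ u ∈ S.powerset,
        ((Nat.choose (d - 1) u.card : ℝ))⁻¹ * (val (insert j u) - val u)
          = if t ⊆ u then ((Nat.choose (d - 1) u.card : ℝ))⁻¹ * c else 0 := by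
      intro u hu
      rw [Finset.mem_powerset] at hu
      have hju : j ∉ u := fun h => (Finset.mem_erase.mp (hu h)).1 rfl
      have h1 : val (insert j u) = if t ⊆ u then c else 0 := by
        rw [hval]; congr 1
        simp only [eq_iff_iff]
        exact Finset.subset_insert_iff
      have h2 : val u = 0 := by
        rw [hval, if_neg]; exact fun h => hju (h hj)
      rw [h1, h2, sub_zero]
      split <;> simp
    rw [shapley, Finset.sum_congr rfl stepA, Finset.sum_ite, Finset.sum_const_zero, add_zero]
    -- Step B: reindex by u ↦ u \ t
    have stepB : ∑ u ∈ S.powerset.filter (fun u => t ⊆ u),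
          ((Nat.choose (d - 1) u.card : ℝ))⁻¹ * c
        = ∑ w ∈ (S \ t).powerset, ((Nat.choose (d - 1) (w.card + t.card) : ℝ))⁻¹ * c := by
      refine Finset.sum_nbij' (fun u => u \ t) (fun w => w ∪ t) ?_ ?_ ?_ ?_ ?_
      · intro u hu
        rw [Finset.mem_filter, Finset.mem_powerset] at hu
        rw [Finset.mem_powerset]
        exact Finset.sdiff_subset_sdiff hu.1 Finset.Subset.rfl
      · intro w hw
        rw [Finset.mem_powerset, Finset.subset_sdiff] at hw
        rw [Finset.mem_filter, Finset.mem_powerset]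
        exact ⟨Finset.union_subset hw.1 htS, Finset.subset_union_right⟩
      · intro u hu
        rw [Finset.mem_filter] at hu
        exact Finset.sdiff_union_of_subset hu.2
      · intro w hw
        rw [Finset.mem_powerset, Finset.subset_sdiff] at hw
        exact Finset.union_sdiff_cancel_right hw.2
      · intro u hu
        rw [Finset.mem_filter] at hu
        rw [Finset.card_sdiff_add_card_eq_card hu.2]
    rw [stepB]
    -- Step C: sum over powerset by cardinality
    have hSt : (S \ t).card = d - v.card := by
      rw [Finset.card_sdiff_of_subset htS, hScard, htcard]; omega
    rw [Finset.sum_powerset_apply_card (fun k => ((Nat.choose (d - 1) (k + t.card) : ℝ))⁻¹ * c),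
      hSt]
    have hvd : v.card ≤ d := by
      have := Finset.card_le_card (Finset.subset_univ v)
      simpa [Finset.card_univ] using this
    have hkey := shapley_key (d - 1) (v.card - 1) (by omega)
    have hrw : ∑ k ∈ range (d - v.card + 1),
          (d - v.card).choose k • (((Nat.choose (d - 1) (k + t.card) : ℝ))⁻¹ * c)
        = (∑ k ∈ range ((d - 1) - (v.card - 1) + 1),
            (Nat.choose ((d - 1) - (v.card - 1)) k : ℝ)
              * ((Nat.choose (d - 1) (k + (v.card - 1)) : ℝ))⁻¹) * c := by
      rw [Finset.sum_mul]
      rw [show (d - 1) - (v.card - 1) = d - v.card from by omega]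
      refine Finset.sum_congr rfl fun k _ => ?_
      rw [htcard, nsmul_eq_mul, mul_assoc]
    rw [hrw, hkey]
    have hd0 : (d : ℝ) ≠ 0 := Nat.cast_ne_zero.mpr (by omega)
    have hv0 : (v.card : ℝ) ≠ 0 := Nat.cast_ne_zero.mpr (by omega)
    have hc1 : ((d - 1 : ℕ) : ℝ) + 1 = (d : ℝ) := by
      rw [Nat.cast_sub hd]; ring
    have hc2 : ((v.card - 1 : ℕ) : ℝ) + 1 = (v.card : ℝ) := by
      rw [Nat.cast_sub hm]; ring
    rw [hc1, hc2]
    field_simp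
    try ring
  · -- j ∉ v
    intro hj
    rw [shapley]
    have : ∀ u ∈ (Finset.univ.erase j).powerset,
        ((Nat.choose (d - 1) u.card : ℝ))⁻¹ * (val (insert j u) - val u) = 0 := by
      intro u _
      have : val (insert j u) = val u := by
        rw [hval, hval]
        congr 1
        simp only [eq_iff_iff]
        constructor
        · intro h x hx
          rcases Finset.mem_insert.mp (h hx) with h' | h'
          · exact absurd (h' ▸ hx) hj
          · exact h'
        · intro h
          exact h.trans (Finset.subset_insert j u)
      rw [this, sub_self, mul_zero]
    rw [Finset.sum_congr rfl this, Finset.sum_const_zero, mul_zero]
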